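/- Let u ∈ ℝ^{n+1} be a unit vector with all entries nonzero. For all real x > 0 and all real y, F_u(x + iy) = |F_u(x + iy)|·exp(i·Φ_u(x, y)); that is, Φ_u(x, y) is congruent to the argument of F_u(x + iy) modulo 2π. In particular, if Φ_u(x, y) = 0 then F_u(x + iy) is a positive real number. -/

import Mathlib

open MeasureTheory

/-- The function `F_u(t) = ∏ j, e^{i u_j t} / (1 + i u_j t)`. -/
noncomputable def Fchar {m : ℕ} (u : Fin m → ℝ) (t : ℂ) : ℂ :=
  ∏ j, Complex.exp (Complex.I * u j * t) / (1 + Complex.I * u j * t)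

/-- The continuous inverse cotangent with range `(0, π)`. -/
noncomputable def arccot (θ : ℝ) : ℝ := Real.pi / 2 - Real.arctan θ

/-- The lifting `Φ_u(x, y)` of the argument of `F_u(x + iy)` (for `x > 0`). -/
noncomputable def Phi {m : ℕ} (u : Fin m → ℝ) (x y : ℝ) : ℝ :=
  x * ∑ j, u j
    - ∑ j ∈ Finset.univ.filter (fun j => 0 < u j), arccot ((1 / u j - y) / x)
    + ∑ j ∈ Finset.univ.filter (fun j => u j < 0), arccot (-(1 / u j - y) / x)


lemma cos_arccot (t : ℝ) : Real.cos (arccot t) = t / Real.sqrt (1 + t ^ 2) := by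
  rw [arccot, Real.cos_pi_div_two_sub, Real.sin_arctan]

lemma sin_arccot (t : ℝ) : Real.sin (arccot t) = 1 / Real.sqrt (1 + t ^ 2) := by
  rw [arccot, Real.sin_pi_div_two_sub, Real.cos_arctan]

lemma polar_aux (a x : ℝ) (hx : 0 < x) :
    (a : ℂ) + Complex.I * x
      = (Real.sqrt (a ^ 2 + x ^ 2) : ℂ) * Complex.exp (Complex.I * arccot (a / x)) := by
  have hs : (0:ℝ) < Real.sqrt (1 + (a/x)^2) := Real.sqrt_pos.2 (by positivity)
  have h2 : a ^ 2 + x ^ 2 = x ^ 2 * (1 + (a/x)^2) := by field_simp; ring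
  have h1 : Real.sqrt (a ^ 2 + x ^ 2) = x * Real.sqrt (1 + (a/x)^2) := by
    rw [h2, Real.sqrt_mul (sq_nonneg x), Real.sqrt_sq hx.le]
  have hexp : Complex.exp (Complex.I * arccot (a/x))
      = ((Real.cos (arccot (a/x)) : ℂ)) + (Real.sin (arccot (a/x)) : ℂ) * Complex.I := by
    rw [mul_comm, Complex.exp_mul_I, Complex.ofReal_cos, Complex.ofReal_sin]
  rw [hexp, cos_arccot, sin_arccot, h1]
  have hs' : (Real.sqrt (1 + (a/x)^2) : ℂ) ≠ 0 := by exact_mod_cast hs.ne'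
  have hx' : (x:ℂ) ≠ 0 := by exact_mod_cast hx.ne'
  have h3 : ((Real.sqrt (x^2+a^2)) : ℂ) ≠ 0 := by
    exact_mod_cast (Real.sqrt_pos.2 (by positivity)).ne'
  push_cast
  field_simp
  have h4 : ((Real.sqrt ((x ^ 2 + a ^ 2) / x ^ 2) : ℝ) : ℂ) ≠ 0 := by
    exact_mod_cast (Real.sqrt_pos.2 (by positivity)).ne'
  rw [mul_div_cancel_right₀ _ h4]

lemma polar_aux' (a x : ℝ) (hx : 0 < x) :
    (a : ℂ) - Complex.I * x
      = (Real.sqrt (a ^ 2 + x ^ 2) : ℂ) * Complex.exp (-(Complex.I * arccot (a / x))) := by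
  have := congrArg (starRingEnd ℂ) (polar_aux a x hx)
  simpa [sub_eq_add_neg, map_mul, Complex.conj_ofReal, ← Complex.exp_conj, Complex.conj_I] using this

noncomputable def theta (u x y : ℝ) : ℝ :=
  u * x + (if 0 < u then -arccot ((1/u - y)/x) else arccot (-(1/u - y)/x))

lemma div_polar {z w : ℂ} {c d α β : ℝ} (hd : 0 < d)
    (hz : z = (c : ℂ) * Complex.exp (Complex.I * α))
    (hw : w = (d : ℂ) * Complex.exp (Complex.I * β)) :
    z / w = ((c / d : ℝ) : ℂ) * Complex.exp (Complex.I * ((α - β : ℝ) : ℂ)) := by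
  have hd' : (d : ℂ) ≠ 0 := by exact_mod_cast hd.ne'
  have h : Complex.exp (Complex.I * ((α - β : ℝ) : ℂ))
      = Complex.exp (Complex.I * α) / Complex.exp (Complex.I * β) := by
    rw [← Complex.exp_sub]; congr 1; push_cast; ring
  rw [hz, hw, h, mul_div_mul_comm]
  push_cast
  ring

lemma factor_eq (u x y : ℝ) (hu : u ≠ 0) (hx : 0 < x) :
    ∃ r : ℝ, 0 < r ∧
      Complex.exp (Complex.I * u * (x + Complex.I * y)) / (1 + Complex.I * u * (x + Complex.I * y))
        = (r : ℂ) * Complex.exp (Complex.I * theta u x y) := by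
  set a : ℝ := 1 / u - y with ha
  have hu' : (u : ℂ) ≠ 0 := by exact_mod_cast hu
  have hden : 1 + Complex.I * u * (x + Complex.I * y) = (u:ℂ) * ((a:ℂ) + Complex.I * x) := by
    rw [ha]; push_cast; field_simp; linear_combination ((u:ℂ) * y) * Complex.I_sq
  have hnum : Complex.exp (Complex.I * u * (x + Complex.I * y))
      = ((Real.exp (-(u*y)) : ℝ) : ℂ) * Complex.exp (Complex.I * ((u * x : ℝ) : ℂ)) := by
    rw [Complex.ofReal_exp, ← Complex.exp_add]
    congr 1
    push_cast
    linear_combination ((u:ℂ) * y) * Complex.I_sq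
  have hsq : (0:ℝ) < Real.sqrt (a ^ 2 + x ^ 2) := Real.sqrt_pos.2 (by positivity)
  rcases lt_or_gt_of_ne hu with hneg | hpos
  · -- u < 0
    have key : (u:ℂ) * ((a:ℂ) + Complex.I * x)
        = (((-u) * Real.sqrt (a ^ 2 + x ^ 2) : ℝ) : ℂ)
          * Complex.exp (Complex.I * ((-arccot (-a / x) : ℝ) : ℂ)) := by
      have h := polar_aux' (-a) x hx
      have h2 : ((-a:ℝ)^2 + x^2) = a^2 + x^2 := by ring
      rw [h2] at h
      have hI : Complex.I * ((-arccot (-a/x) : ℝ) : ℂ) = -(Complex.I * ((arccot (-a/x) : ℝ) : ℂ)) := by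
        push_cast; ring
      rw [hI]
      push_cast at h ⊢
      linear_combination (-(u : ℂ)) * h
    have hth : theta u x y = u * x - (-arccot (-a/x)) := by
      rw [theta, if_neg (not_lt.2 hneg.le), ha]; ring
    have hpos' : (0:ℝ) < (-u) * Real.sqrt (a ^ 2 + x ^ 2) := mul_pos (neg_pos.2 hneg) hsq
    refine ⟨Real.exp (-(u*y)) / ((-u) * Real.sqrt (a ^ 2 + x ^ 2)), div_pos (Real.exp_pos _) hpos', ?_⟩
    rw [hden, hth]
    exact div_polar hpos' hnum key
  · -- u > 0
    have key : (u:ℂ) * ((a:ℂ) + Complex.I * x)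
        = ((u * Real.sqrt (a ^ 2 + x ^ 2) : ℝ) : ℂ)
          * Complex.exp (Complex.I * ((arccot (a / x) : ℝ) : ℂ)) := by
      have h := polar_aux a x hx
      push_cast at h ⊢
      linear_combination (u : ℂ) * h
    have hth : theta u x y = u * x - arccot (a/x) := by
      rw [theta, if_pos hpos, ha]; ring
    refine ⟨Real.exp (-(u*y)) / (u * Real.sqrt (a ^ 2 + x ^ 2)), by positivity, ?_⟩
    rw [hden, hth]
    exact div_polar (by positivity) hnum key

theorem stmt7 (n : ℕ) (u : Fin (n + 1) → ℝ) (hu : ∑ j, (u j) ^ 2 = 1)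
    (hnz : ∀ j, u j ≠ 0) (x y : ℝ) (hx : 0 < x) :
    Fchar u (x + Complex.I * y) =
      (‖Fchar u (x + Complex.I * y)‖ : ℂ) * Complex.exp (Complex.I * Phi u x y) ∧
    (Phi u x y = 0 →
      (Fchar u (x + Complex.I * y)).im = 0 ∧ 0 < (Fchar u (x + Complex.I * y)).re) := by
  choose r hr hfac using fun j => factor_eq (u j) x y (hnz j) hx
  have hrpos : (0:ℝ) < ∏ j, r j := Finset.prod_pos (fun j _ => hr j)
  have hprod : Fchar u ((x:ℂ) + Complex.I * y)
      = ((∏ j, r j : ℝ) : ℂ) * Complex.exp (Complex.I * ((∑ j, theta (u j) x y : ℝ) : ℂ)) := by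
    rw [Fchar]
    rw [Finset.prod_congr rfl (fun j _ => hfac j), Finset.prod_mul_distrib]
    congr 1
    · push_cast; ring
    · rw [← Complex.exp_sum]
      congr 1
      push_cast
      rw [Finset.mul_sum]
  have hnorm : ‖Fchar u ((x:ℂ) + Complex.I * y)‖ = ∏ j, r j := by
    rw [hprod, norm_mul, Complex.norm_real, Real.norm_eq_abs,
      Complex.norm_exp, abs_of_pos hrpos]
    simp
  have hsum : ∑ j, theta (u j) x y = Phi u x y := by
    unfold theta Phi
    have hfil : Finset.univ.filter (fun j => ¬ 0 < u j)
        = Finset.univ.filter (fun j : Fin (n+1) => u j < 0) := by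
      ext j
      simp only [Finset.mem_filter, Finset.mem_univ, true_and, not_lt]
      exact ⟨fun h => h.lt_of_ne (hnz j), le_of_lt⟩
    rw [Finset.sum_add_distrib, Finset.sum_ite, hfil, Finset.sum_neg_distrib, ← Finset.sum_mul]
    ring
  have hmain : Fchar u ((x:ℂ) + Complex.I * y)
      = (‖Fchar u ((x:ℂ) + Complex.I * y)‖ : ℂ) * Complex.exp (Complex.I * Phi u x y) := by
    rw [hnorm, ← hsum, hprod]
  refine ⟨hmain, fun hphi => ?_⟩
  rw [hphi] at hmain
  simp only [Complex.ofReal_zero, mul_zero, Complex.exp_zero, mul_one] at hmain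
  constructor
  · rw [hmain]; simp
  · rw [hmain, Complex.ofReal_re, hnorm]; exact hrpos
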